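/- arXiv:0803.0665 — 2 statements merged into one kernel-verified Lean document; each statement's English description precedes it below -/
import Mathlib

section
/- Finitely generated free groups are Hopfian: every surjective group homomorphism from the free group on c generators to itself is injective. -/
/-- Any "partial injection" given by an `Option`-valued map on a finite type
extends to a permutation. -/
lemma exists_perm_extend {α : Type*} [DecidableEq α] [Fintype α] (p : α → Option α)
    (hinj : ∀ a b x, p a = some x → p b = some x → a = b) :
    ∃ π : Equiv.Perm α, ∀ a x, p a = some x → π a = x := by
  classical
  have hbij : Function.Bijective (fun a : {a // (p a).isSome = true} =>
      (⟨(p a.1).get a.2, ⟨a.1, (Option.some_get a.2).symm⟩⟩ :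
        {x // ∃ a, p a = some x})) := by
    constructor
    · rintro ⟨a, ha⟩ ⟨b, hb⟩ h
      have h' : (p a).get ha = (p b).get hb := congrArg Subtype.val h
      exact Subtype.ext (hinj a b ((p b).get hb)
        (by rw [← h']; exact (Option.some_get ha).symm) (Option.some_get hb).symm)
    · rintro ⟨x, a, hax⟩
      have ha : (p a).isSome = true := by simp [hax]
      exact ⟨⟨a, ha⟩, Subtype.ext (by simp [hax])⟩
  set q := Equiv.ofBijective _ hbij with hq
  have e : {a // ¬ (p a).isSome = true} ≃ {x // ¬ ∃ a, p a = some x} :=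
    Fintype.equivOfCardEq (by
      rw [Fintype.card_subtype_compl, Fintype.card_subtype_compl, Fintype.card_congr q])
  refine ⟨(Equiv.sumCompl (fun a => (p a).isSome = true)).symm.trans
    ((q.sumCongr e).trans (Equiv.sumCompl (fun x => ∃ a, p a = some x))), ?_⟩
  intro a x hax
  have ha : (p a).isSome = true := by simp [hax]
  have h1 : (Equiv.sumCompl (fun a => (p a).isSome = true)).symm a = Sum.inl ⟨a, ha⟩ :=
    Equiv.sumCompl_symm_apply_of_pos (p := fun a => (p a).isSome = true) (a := a) ha
  simp only [Equiv.trans_apply, h1, Equiv.sumCongr_apply, Sum.map_inl,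
    Equiv.sumCompl_apply_inl]
  show (p a).get ha = x
  simp [hax]

/-- Free groups on finitely many generators are residually finite (witnessed by
permutation representations). -/
lemma freeGroup_res_fin {c : ℕ} (g : FreeGroup (Fin c)) (hg : g ≠ 1) :
    ∃ (n : ℕ) (φ : FreeGroup (Fin c) →* Equiv.Perm (Fin (n + 1))), φ g ≠ 1 := by
  classical
  set L : List (Fin c × Bool) := g.toWord with hL
  set n : ℕ := L.length with hn
  have hn0 : n ≠ 0 := by
    intro h
    exact hg (FreeGroup.toWord_eq_nil_iff.mp (List.length_eq_zero_iff.mp h))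
  have hLred : FreeGroup.reduce L = L := FreeGroup.reduce_toWord g
  -- no adjacent cancelling letters
  have hnoadj : ∀ (k : ℕ) (i : Fin c) (b : Bool),
      L[k]? = some (i, b) → L[k + 1]? = some (i, !b) → False := by
    intro k i b h1 h2
    obtain ⟨hk1, he1⟩ := List.getElem?_eq_some_iff.mp h1
    obtain ⟨hk2, he2⟩ := List.getElem?_eq_some_iff.mp h2
    have hsplit : L = L.take k ++ (i, b) :: (i, !b) :: L.drop (k + 2) := by
      conv_lhs => rw [← List.take_append_drop k L]
      rw [List.drop_eq_getElem_cons hk1, he1, List.drop_eq_getElem_cons hk2, he2]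
    exact FreeGroup.reduce.not (L₂ := L.take k) (L₃ := L.drop (k + 2)) (x := i) (b := b)
      (by rw [hLred]; exact hsplit)
  -- the partial injections defining the permutation representation
  set p : Fin c → Fin (n + 1) → Option (Fin (n + 1)) := fun i x =>
    if h : (x : ℕ) < n ∧ L[n - 1 - (x : ℕ)]? = some (i, true) then
      some ⟨(x : ℕ) + 1, by omega⟩
    else if h' : 0 < (x : ℕ) ∧ L[n - (x : ℕ)]? = some (i, false) then
      some ⟨(x : ℕ) - 1, by have := x.isLt; omega⟩
    else none with hp
  have hp_fwd : ∀ (i : Fin c) (x : Fin (n + 1)) (hx : (x : ℕ) < n),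
      L[n - 1 - (x : ℕ)]? = some (i, true) → p i x = some ⟨(x : ℕ) + 1, by omega⟩ := by
    intro i x hx h
    simp only [hp]
    rw [dif_pos ⟨hx, h⟩]
  have hp_bwd : ∀ (i : Fin c) (x : Fin (n + 1)) (hx : 0 < (x : ℕ)),
      L[n - (x : ℕ)]? = some (i, false) →
      p i x = some ⟨(x : ℕ) - 1, by have := x.isLt; omega⟩ := by
    intro i x hx h
    have hfwd : ¬ ((x : ℕ) < n ∧ L[n - 1 - (x : ℕ)]? = some (i, true)) := by
      rintro ⟨hxn, hfw⟩
      have hidx : n - 1 - (x : ℕ) + 1 = n - (x : ℕ) := by omega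
      exact hnoadj (n - 1 - (x : ℕ)) i true hfw (by rw [hidx]; simpa using h)
    simp only [hp]
    rw [dif_neg hfwd, dif_pos ⟨hx, h⟩]
  have hpinj : ∀ (i : Fin c) (a b x : Fin (n + 1)),
      p i a = some x → p i b = some x → a = b := by
    intro i a b x ha hb
    have key : ∀ y : Fin (n + 1), p i y = some x →
        ((y : ℕ) < n ∧ L[n - 1 - (y : ℕ)]? = some (i, true) ∧ (x : ℕ) = (y : ℕ) + 1) ∨
        (0 < (y : ℕ) ∧ L[n - (y : ℕ)]? = some (i, false) ∧ (x : ℕ) = (y : ℕ) - 1) := by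
      intro y hy
      simp only [hp] at hy
      by_cases h1 : (y : ℕ) < n ∧ L[n - 1 - (y : ℕ)]? = some (i, true)
      · rw [dif_pos h1] at hy
        left
        exact ⟨h1.1, h1.2, by rw [← Option.some_inj.mp hy]⟩
      · rw [dif_neg h1] at hy
        by_cases h2 : 0 < (y : ℕ) ∧ L[n - (y : ℕ)]? = some (i, false)
        · rw [dif_pos h2] at hy
          right
          exact ⟨h2.1, h2.2, by rw [← Option.some_inj.mp hy]⟩
        · rw [dif_neg h2] at hy; exact absurd hy (by simp)
    rcases key a ha with ⟨hA1, hA2, hA3⟩ | ⟨hA1, hA2, hA3⟩ <;>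
      rcases key b hb with ⟨hB1, hB2, hB3⟩ | ⟨hB1, hB2, hB3⟩
    · exact Fin.ext (by omega)
    · -- a forward, b backward: x = a+1 = b-1, so b = a+2
      exfalso
      have hb2 : (b : ℕ) = (a : ℕ) + 2 := by omega
      have hidx : n - (b : ℕ) + 1 = n - 1 - (a : ℕ) := by
        have := b.isLt; omega
      exact hnoadj (n - (b : ℕ)) i false hB2 (by rw [hidx]; simpa using hA2)
    · exfalso
      have ha2 : (a : ℕ) = (b : ℕ) + 2 := by omega
      have hidx : n - (a : ℕ) + 1 = n - 1 - (b : ℕ) := by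
        have := a.isLt; omega
      exact hnoadj (n - (a : ℕ)) i false hA2 (by rw [hidx]; simpa using hB2)
    · exact Fin.ext (by have := a.isLt; have := b.isLt; omega)
  choose σ hσ using fun i => exists_perm_extend (p i) (hpinj i)
  refine ⟨n, FreeGroup.lift σ, ?_⟩
  -- main computation: the image of g moves 0 to n
  have main : ∀ (M T : List (Fin c × Bool)) (hT : L = T ++ M),
      (List.prod (M.map fun x => cond x.2 (σ x.1) (σ x.1)⁻¹)) ⟨0, by omega⟩
        = ⟨M.length, by
            have h := congrArg List.length hT
            rw [List.length_append] at h
            omega⟩ := by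
    intro M
    induction M with
    | nil => intro T hT; simp
    | cons x M ih =>
      intro T hT
      have hT' : L = (T ++ [x]) ++ M := by rw [hT]; simp
      have hlen : T.length + 1 + M.length = n := by
        rw [hn, hT]; simp [List.length_append]; omega
      have hgetx : L[T.length]? = some x := by
        rw [hT, List.getElem?_append_right (le_refl T.length)]
        simp
      have hIH := ih (T ++ [x]) hT'
      simp only [List.map_cons, List.prod_cons, Equiv.Perm.mul_apply, hIH,
        List.length_cons]
      rcases x with ⟨i, b⟩
      cases b with
      | true =>
        have hfw : L[n - 1 - M.length]? = some (i, true) := by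
          have hidx : n - 1 - M.length = T.length := by omega
          rw [hidx]; exact hgetx
        have hpv := hp_fwd i ⟨M.length, by omega⟩ (by simp only [Fin.val_mk]; omega)
          (by simpa using hfw)
        have hσv := hσ i ⟨M.length, by omega⟩ _ hpv
        simpa using hσv
      | false =>
        have hbw : L[n - (M.length + 1)]? = some (i, false) := by
          have hidx : n - (M.length + 1) = T.length := by omega
          rw [hidx]; exact hgetx
        have hpv := hp_bwd i ⟨M.length + 1, by omega⟩ (by simp)
          (by simpa using hbw)
        have hσv := hσ i ⟨M.length + 1, by omega⟩ _ hpv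
        simp only [cond_false]
        apply (σ i).injective
        rw [← Equiv.Perm.mul_apply, mul_inv_cancel, Equiv.Perm.one_apply, hσv]
        exact Fin.ext (by simp)
  have hcalc : (FreeGroup.lift σ) g ⟨0, by omega⟩ = ⟨n, by omega⟩ := by
    have h1 : g = FreeGroup.mk L := (FreeGroup.mk_toWord).symm
    rw [show FreeGroup.lift σ g = _ from (congrArg (FreeGroup.lift σ) h1).trans FreeGroup.lift_mk]
    have hm := main L [] (by simp)
    rw [hm]
  intro h1
  rw [h1] at hcalc
  have h2 := congrArg Fin.val hcalc
  simp at h2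
  exact hn0 h2.symm

/-- Finitely generated free groups are Hopfian: a surjective endomorphism of
the free group on `c` generators is injective. -/
theorem freeGroup_hopfian (c : ℕ)
    (f : FreeGroup (Fin c) →* FreeGroup (Fin c))
    (hf : Function.Surjective f) : Function.Injective f := by
  rw [injective_iff_map_eq_one]
  intro g hg1
  by_contra hg
  obtain ⟨n, φ, hφ⟩ := freeGroup_res_fin g hg
  have : Finite (FreeGroup (Fin c) →* Equiv.Perm (Fin (n + 1))) :=
    Finite.of_equiv _ (FreeGroup.lift (α := Fin c) (β := Equiv.Perm (Fin (n + 1))))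
  have hT : Function.Injective
      (fun ψ : FreeGroup (Fin c) →* Equiv.Perm (Fin (n + 1)) => ψ.comp f) := by
    intro a b h
    exact (MonoidHom.cancel_right hf).mp h
  obtain ⟨ψ, hψ⟩ := Finite.injective_iff_surjective.mp hT φ
  apply hφ
  have := congrArg (fun h : FreeGroup (Fin c) →* Equiv.Perm (Fin (n + 1)) => h g) hψ
  simp only [MonoidHom.comp_apply, hg1, map_one] at this
  exact this.symm
end

section
/- If a subgroup H of the free group F(c) with c ≥ 2 is both a quotient (image of a homomorphism from F(c)) and a proper subgroup of finite index in F(c), then a contradiction follows; i.e., no proper finite-index subgroup of F(c) is generated by c or fewer elements when c ≥ 2. -/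
namespace NPFQ

variable {c : ℕ} (H : Subgroup (FreeGroup (Fin c)))

abbrev Z : Type := Multiplicative (ZMod 2)
abbrev X := FreeGroup (Fin c) ⧸ H
abbrev M := X H → Z

/-- The permutation action on `M` by precomposition with the inverse. -/
def act : Equiv.Perm (X H) →* MulAut (M H) where
  toFun σ :=
  { toFun := fun v => v ∘ σ.symm
    invFun := fun v => v ∘ σ
    left_inv := fun v => by funext x; simp
    right_inv := fun v => by funext x; simp
    map_mul' := fun v w => rfl }
  map_one' := rfl
  map_mul' := fun σ τ => rfl

/-- The action homomorphism on the coset space. -/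
def φ : FreeGroup (Fin c) →* Equiv.Perm (X H) := MulAction.toPermHom _ _

lemma φ_symm_apply (g : FreeGroup (Fin c)) (x : X H) : (φ H g).symm x = g⁻¹ • x := by
  rw [Equiv.symm_apply_eq]
  exact (smul_inv_smul g x).symm

/-- The lift homomorphism determined by cocycle data `u`. -/
def Ψ (u : Fin c → M H) : FreeGroup (Fin c) →* (M H ⋊[act H] Equiv.Perm (X H)) :=
  FreeGroup.lift fun i => ⟨u i, φ H (FreeGroup.of i)⟩

lemma Ψ_of (u : Fin c → M H) (i : Fin c) : Ψ H u (FreeGroup.of i) = ⟨u i, φ H (FreeGroup.of i)⟩ :=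
  FreeGroup.lift_apply_of

lemma Ψ_right (u : Fin c → M H) (g : FreeGroup (Fin c)) : (Ψ H u g).right = φ H g := by
  have : SemidirectProduct.rightHom.comp (Ψ H u) = φ H := by
    apply FreeGroup.ext_hom
    intro i
    simp [Ψ_of]
  exact DFunLike.congr_fun this g


lemma Ψ_one_left (g : FreeGroup (Fin c)) : (Ψ H 1 g).left = 1 := by
  have : Ψ H 1 = SemidirectProduct.inr.comp (φ H) := by
    apply FreeGroup.ext_hom
    intro i
    simp [Ψ_of]
  rw [this]
  rfl

lemma Ψ_mul_left (u v : Fin c → M H) (g : FreeGroup (Fin c)) :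
    (Ψ H (u * v) g).left = (Ψ H u g).left * (Ψ H v g).left := by
  let θ : FreeGroup (Fin c) →* (M H ⋊[act H] Equiv.Perm (X H)) :=
  { toFun := fun g => ⟨(Ψ H u g).left * (Ψ H v g).left, φ H g⟩
    map_one' := by simp
    map_mul' := fun g g' => by
      apply SemidirectProduct.ext
      · show (Ψ H u (g * g')).left * (Ψ H v (g * g')).left =
          ((Ψ H u g).left * (Ψ H v g).left) *
            (act H (φ H g)) ((Ψ H u g').left * (Ψ H v g').left)
        rw [map_mul (Ψ H u), map_mul (Ψ H v), SemidirectProduct.mul_left,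
          SemidirectProduct.mul_left, Ψ_right, Ψ_right, map_mul, mul_mul_mul_comm]
      · exact map_mul (φ H) g g' }
  have : Ψ H (u * v) = θ := by
    apply FreeGroup.ext_hom
    intro i
    show Ψ H (u*v) (FreeGroup.of i) = _
    rw [Ψ_of]
    show (⟨u i * v i, φ H (FreeGroup.of i)⟩ : M H ⋊[act H] Equiv.Perm (X H)) = _
    congr 1 <;> rw [Ψ_of, Ψ_of]
  rw [this]
  rfl

/-- base point -/
def x₀ : X H := ((1 : FreeGroup (Fin c)) : X H)

lemma smul_x₀ (g : FreeGroup (Fin c)) : g • (x₀ H) = (g : X H) := by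
  show g • ((1 : FreeGroup (Fin c)) : X H) = _
  rw [MulAction.Quotient.smul_mk, smul_eq_mul, mul_one]

lemma mem_fixes {h : FreeGroup (Fin c)} (hh : h ∈ H) : h • x₀ H = x₀ H := by
  rw [smul_x₀]
  exact (QuotientGroup.eq ).mpr (by simpa using hh)

lemma fixes_mem {h : FreeGroup (Fin c)} (hh : h • x₀ H = x₀ H) : h ∈ H := by
  rw [smul_x₀] at hh
  have := (QuotientGroup.eq).mp hh
  simpa using this


/-- evaluation of the cocycle at the base point, as a homomorphism on `H` -/
def ℓ (u : Fin c → M H) : H →* Z where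
  toFun h := (Ψ H u h).left (x₀ H)
  map_one' := by
    show (Ψ H u ((1 : H) : FreeGroup (Fin c))).left (x₀ H) = 1
    rw [OneMemClass.coe_one, map_one]
    rfl
  map_mul' h h' := by
    show (Ψ H u ((h : FreeGroup (Fin c)) * (h' : FreeGroup (Fin c)))).left (x₀ H) = _
    rw [map_mul, SemidirectProduct.mul_left]
    show _ * (Ψ H u h').left (((Ψ H u ↑h).right).symm (x₀ H)) = _
    rw [Ψ_right, φ_symm_apply]
    have : (h : FreeGroup (Fin c))⁻¹ • x₀ H = x₀ H := mem_fixes H (inv_mem h.2)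
    rw [this]

/-- the main homomorphism counting map -/
def L : (Fin c → M H) →* (H →* Z) where
  toFun := ℓ H
  map_one' := by
    ext h
    show (Ψ H 1 (h : FreeGroup (Fin c))).left (x₀ H) = 1
    rw [Ψ_one_left]
    rfl
  map_mul' u v := by
    ext h
    show (Ψ H (u * v) (h : FreeGroup (Fin c))).left (x₀ H) = _
    rw [Ψ_mul_left]
    rfl

/-- coboundary map -/
def del : M H →* (Fin c → M H) where
  toFun b := fun i x => b x * (b ((FreeGroup.of i)⁻¹ • x))⁻¹
  map_one' := by funext i x; simp
  map_mul' b b' := by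
    funext i x
    show (b x * b' x) * (b ((FreeGroup.of i)⁻¹ • x) * b' ((FreeGroup.of i)⁻¹ • x))⁻¹ = _
    show _ = (b x * (b _)⁻¹) * (b' x * (b' _)⁻¹)
    rw [mul_inv, mul_mul_mul_comm]

lemma ker_L_le_range_del : (L H).ker ≤ (del H).range := by
  intro u hu
  have hu' : ∀ h : H, (Ψ H u (h : FreeGroup (Fin c))).left (x₀ H) = 1 := by
    intro h
    have : ℓ H u h = 1 := by rw [show ℓ H u = 1 from hu]; rfl
    exact this
  -- the cocycle
  set v : FreeGroup (Fin c) → M H := fun g => (Ψ H u g).left with hv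
  have cocycle : ∀ g g' : FreeGroup (Fin c), ∀ x : X H,
      v (g * g') x = v g x * v g' (g⁻¹ • x) := by
    intro g g' x
    show (Ψ H u (g * g')).left x = _
    rw [map_mul, SemidirectProduct.mul_left]
    show _ * (Ψ H u g').left (((Ψ H u g).right).symm x) = _
    rw [Ψ_right, φ_symm_apply]
  have vone : ∀ x, v 1 x = 1 := by
    intro x
    show (Ψ H u 1).left x = 1
    rw [map_one]
    rfl
  have vinv : ∀ g : FreeGroup (Fin c), ∀ x : X H, v g⁻¹ x = (v g (g • x))⁻¹ := by
    intro g x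
    have h3 : v (g * g⁻¹) (g • x) = v g (g • x) * v g⁻¹ (g⁻¹ • (g • x)) := cocycle g g⁻¹ (g • x)
    rw [mul_inv_cancel, vone, inv_smul_smul] at h3
    rw [eq_inv_iff_mul_eq_one, mul_comm]
    exact h3.symm
  -- base function
  set b : M H := fun x => v (Quotient.out x) x with hb
  have houtfix : ∀ x : X H, (Quotient.out x) • x₀ H = x := by
    intro x
    rw [smul_x₀]
    exact QuotientGroup.out_eq' x
  have key : ∀ (g : FreeGroup (Fin c)) (x : X H), v g x = b x * (b (g⁻¹ • x))⁻¹ := by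
    intro g x
    set t := Quotient.out x with ht
    set t' := Quotient.out (g⁻¹ • x) with ht'
    set s := t⁻¹ * g * t' with hs
    have hsx : s • x₀ H = x₀ H := by
      rw [hs, mul_smul, mul_smul, houtfix, smul_inv_smul, inv_smul_eq_iff, houtfix]
    have hsH : s ∈ H := fixes_mem H hsx
    have hg : g = t * (s * t'⁻¹) := by
      rw [hs]; group
    have e1 : v g x = v t x * v (s * t'⁻¹) (t⁻¹ • x) := by
      rw [hg] at *
      exact cocycle t (s * t'⁻¹) x
    have htx : t⁻¹ • x = x₀ H := by
      rw [inv_smul_eq_iff, houtfix]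
    have e2 : v (s * t'⁻¹) (x₀ H) = v s (x₀ H) * v t'⁻¹ (s⁻¹ • x₀ H) := cocycle s t'⁻¹ (x₀ H)
    have hs0 : v s (x₀ H) = 1 := hu' ⟨s, hsH⟩
    have hsinv : s⁻¹ • x₀ H = x₀ H := by rw [inv_smul_eq_iff, hsx]
    have e3 : v t'⁻¹ (x₀ H) = (v t' (t' • x₀ H))⁻¹ := vinv t' (x₀ H)
    rw [houtfix] at e3
    rw [e1, htx, e2, hs0, hsinv, one_mul, e3]
  refine ⟨b, ?_⟩
  funext i
  have : (del H) b i = v (FreeGroup.of i) := by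
    funext x
    rw [key (FreeGroup.of i) x]
    rfl
  rw [this, hv]
  show (Ψ H u (FreeGroup.of i)).left = u i
  rw [Ψ_of]


lemma card_range_mul_card_ker {G P : Type*} [Group G] [Group P] (h : G →* P) :
    Nat.card h.range * Nat.card h.ker = Nat.card G := by
  rw [Subgroup.card_eq_card_quotient_mul_card_subgroup h.ker]
  congr 1
  exact (Nat.card_congr (QuotientGroup.quotientKerEquivRange h).toEquiv).symm

end NPFQ

/-- No proper finite-index subgroup of the free group of rank `c ≥ 2` is the
image of a homomorphism from that free group (i.e. generated by `c` or fewer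
elements). -/
theorem no_proper_finite_index_quotient_subgroup (c : ℕ) (hc : 2 ≤ c)
    (H : Subgroup (FreeGroup (Fin c))) (hproper : H ≠ ⊤)
    (hfin : H.index ≠ 0)
    (hquot : ∃ f : FreeGroup (Fin c) →* FreeGroup (Fin c), f.range = H) :
    False := by
  classical
  obtain ⟨f, hf⟩ := hquot
  haveI : H.FiniteIndex := ⟨hfin⟩
  set d := H.index with hd
  have hd2 : 2 ≤ d := by
    have h1 : d ≠ 1 := fun h => hproper (Subgroup.index_eq_one.mp h)
    omega
  have cardZ : Nat.card NPFQ.Z = 2 := by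
    rw [Nat.card_eq_fintype_card]
    rfl
  have cardX : Nat.card (NPFQ.X H) = d := rfl
  have cardM : Nat.card (NPFQ.M H) = 2 ^ d := by
    rw [Nat.card_fun, cardZ, cardX]
  have cardDom : Nat.card (Fin c → NPFQ.M H) = 2 ^ (d * c) := by
    rw [Nat.card_fun, cardM, Nat.card_eq_fintype_card, Fintype.card_fin, ← pow_mul]
  -- coboundaries
  have E2 : Nat.card (NPFQ.del H).range * Nat.card (NPFQ.del H).ker = 2 ^ d := by
    rw [NPFQ.card_range_mul_card_ker, cardM]
  have hker2 : 2 ≤ Nat.card (NPFQ.del H).ker := by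
    show 1 < Nat.card (NPFQ.del H).ker
    rw [Finite.one_lt_card_iff_nontrivial]
    refine ⟨⟨⟨(fun _ => Multiplicative.ofAdd (1 : ZMod 2)), ?_⟩, 1, ?_⟩⟩
    · rw [MonoidHom.mem_ker]
      funext i x
      show Multiplicative.ofAdd (1 : ZMod 2) * (Multiplicative.ofAdd (1 : ZMod 2))⁻¹ = 1
      rw [mul_inv_cancel]
    · intro hcon
      have h2 : (Multiplicative.ofAdd (1 : ZMod 2)) = 1 :=
        congrFun (congrArg Subtype.val hcon) (NPFQ.x₀ H)
      exact absurd h2 (by decide)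
  have hR2 : Nat.card (NPFQ.del H).range ≤ 2 ^ (d - 1) := by
    have h2d : 2 ^ d = 2 * 2 ^ (d - 1) := by
      rw [← pow_succ']
      congr 1
      omega
    have h1 : 2 * Nat.card (NPFQ.del H).range ≤ 2 ^ d := by
      rw [← E2, mul_comm]
      exact Nat.mul_le_mul_left _ hker2
    rw [h2d] at h1
    exact Nat.le_of_mul_le_mul_left h1 (by norm_num)
  have hK1 : Nat.card (NPFQ.L H).ker ≤ 2 ^ (d - 1) :=
    le_trans (Subgroup.card_le_of_le (NPFQ.ker_L_le_range_del H)) hR2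
  -- the evaluation map on generators
  have hmem : ∀ g, f g ∈ H := fun g => by rw [← hf]; exact ⟨g, rfl⟩
  let ev : (H →* NPFQ.Z) →* (Fin c → NPFQ.Z) :=
  { toFun := fun q i => q ⟨f (FreeGroup.of i), hmem _⟩
    map_one' := rfl
    map_mul' := fun q q' => rfl }
  have hker : (ev.comp (NPFQ.L H)).ker = (NPFQ.L H).ker := by
    apply le_antisymm
    · intro u hu
      rw [MonoidHom.mem_ker] at hu ⊢
      have hμ : (NPFQ.L H u).comp (f.codRestrict H hmem) = 1 := by
        apply FreeGroup.ext_hom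
        intro i
        exact congrFun hu i
      ext h
      obtain ⟨w, hw⟩ : (h : FreeGroup (Fin c)) ∈ f.range := by rw [hf]; exact h.2
      have hhw : h = (f.codRestrict H hmem) w := Subtype.ext hw.symm
      rw [hhw]
      have := DFunLike.congr_fun hμ w
      exact this
    · intro u hu
      rw [MonoidHom.mem_ker] at hu ⊢
      rw [MonoidHom.comp_apply, hu, map_one]
  have E1 : Nat.card (ev.comp (NPFQ.L H)).range * Nat.card (NPFQ.L H).ker = 2 ^ (d * c) := by
    rw [← hker, NPFQ.card_range_mul_card_ker, cardDom]
  have hR1 : Nat.card (ev.comp (NPFQ.L H)).range ≤ 2 ^ c := by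
    have h1 := Subgroup.card_le_card_group (ev.comp (NPFQ.L H)).range
    have h2 : Nat.card (Fin c → NPFQ.Z) = 2 ^ c := by
      rw [Nat.card_fun, cardZ, Nat.card_eq_fintype_card, Fintype.card_fin]
    rwa [h2] at h1
  have hfinal : 2 ^ (d * c) ≤ 2 ^ (c + (d - 1)) := by
    rw [← E1, pow_add]
    exact Nat.mul_le_mul hR1 hK1
  have hexp : d * c ≤ c + (d - 1) := (Nat.pow_le_pow_iff_right (by norm_num)).mp hfinal
  have hge : d + c ≤ d * c := add_le_mul hd2 hc
  omega
end
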